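/- arXiv:1601.01550 — 2 statements merged into one kernel-verified Lean document; each statement's English description precedes it below -/
import Mathlib

section
/- With the decomposition and definition above, the Jacobian matrix 𝐅_m = (I − 𝐐) + m𝐕₁𝐔₁' + m𝕍₂𝕌₂' of f_m satisfies: 𝐅_m𝐕₁ = m𝐕₁, 𝐅_m𝕍₂ = 𝕍₂((1+m)I − 𝐉₂), and 𝐅_m𝕍₃ = 𝕍₃(I − 𝐉₃). Consequently the spectrum of 𝐅_m equals {m} ∪ {(1+m) − λ : λ eigenvalue of 𝐉₂} ∪ {1 − λ : λ eigenvalue of 𝐉₃}. -/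
open Matrix

private lemma matIsUnit_of_mul_eq_one {n : Type*} [Fintype n] [DecidableEq n]
    (A B : Matrix n n ℂ) (h : A * B = 1) : IsUnit A :=
  ⟨⟨A, B, h, mul_eq_one_comm.mp h⟩, rfl⟩

private lemma spec_fromBlocks {n₁ n₂ : Type*} [Fintype n₁] [Fintype n₂]
    [DecidableEq n₁] [DecidableEq n₂] (A : Matrix n₁ n₁ ℂ) (B : Matrix n₂ n₂ ℂ) :
    spectrum ℂ (fromBlocks A 0 0 B) = spectrum ℂ A ∪ spectrum ℂ B := by
  ext lam
  have h : algebraMap ℂ (Matrix (n₁ ⊕ n₂) (n₁ ⊕ n₂) ℂ) lam - fromBlocks A 0 0 B =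
      fromBlocks (algebraMap ℂ _ lam - A) 0 0 (algebraMap ℂ _ lam - B) := by
    rw [Algebra.algebraMap_eq_smul_one, Algebra.algebraMap_eq_smul_one,
      Algebra.algebraMap_eq_smul_one, ← fromBlocks_one (l := n₁) (m := n₂),
      fromBlocks_smul, sub_eq_add_neg, fromBlocks_neg, fromBlocks_add]
    simp [sub_eq_add_neg]
  simp only [spectrum.mem_iff, Set.mem_union, h, Matrix.isUnit_iff_isUnit_det,
    Matrix.det_fromBlocks_zero₂₁, isUnit_iff_ne_zero, ne_eq, not_not, mul_eq_zero]

private lemma spec_conj {n k : Type*} [Fintype n] [Fintype k] [DecidableEq n] [DecidableEq k]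
    (W : Matrix n k ℂ) (W' : Matrix k n ℂ) (h1 : W * W' = 1) (h2 : W' * W = 1)
    (M : Matrix k k ℂ) : spectrum ℂ (W * M * W') = spectrum ℂ M := by
  let e : Matrix k k ℂ ≃ₐ[ℂ] Matrix n n ℂ :=
    { toFun := fun X => W * X * W'
      invFun := fun Y => W' * Y * W
      left_inv := fun X => by
        simp only [← Matrix.mul_assoc]
        rw [h2, Matrix.one_mul, Matrix.mul_assoc, h2, Matrix.mul_one]
      right_inv := fun Y => by
        simp only [← Matrix.mul_assoc]
        rw [h1, Matrix.one_mul, Matrix.mul_assoc, h1, Matrix.mul_one]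
      map_mul' := fun X Y => by
        show W * (X * Y) * W' = (W * X * W') * (W * Y * W')
        have e : (W * X * W') * (W * Y * W') = W * (X * ((W' * W) * (Y * W'))) := by
          simp only [Matrix.mul_assoc]
        rw [e, h2, Matrix.one_mul]
        simp only [Matrix.mul_assoc]
      map_add' := fun X Y => by
        show W * (X + Y) * W' = (W * X * W') + (W * Y * W')
        rw [Matrix.mul_add, Matrix.add_mul]
      commutes' := fun r => by
        show W * (algebraMap ℂ (Matrix k k ℂ) r) * W' = algebraMap ℂ (Matrix n n ℂ) r
        rw [Algebra.algebraMap_eq_smul_one, Algebra.algebraMap_eq_smul_one,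
          Matrix.mul_smul, Matrix.mul_one, Matrix.smul_mul, h1] }
  exact AlgEquiv.spectrum_eq e M

private lemma mat_eq_one_of_forall {n : Type*} [Fintype n] [DecidableEq n]
    (M : Matrix n n ℂ) (h : ∀ x : Matrix n (Fin 1) ℂ, M * x = x) : M = 1 := by
  ext i j
  have := congrFun (congrFun (h (Matrix.of fun k (_ : Fin 1) => if k = j then 1 else 0)) i) 0
  simp only [Matrix.mul_apply, Matrix.of_apply, mul_ite, mul_one, mul_zero,
    Finset.sum_ite_eq', Finset.mem_univ, if_true] at this
  rw [this, Matrix.one_apply]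

/-- the Jacobian `𝐅_m = (I − 𝐐) + m𝐕₁𝐔₁' + m𝕍₂𝕌₂'` satisfies
`𝐅_m𝐕₁ = m𝐕₁`, `𝐅_m𝕍₂ = 𝕍₂((1+m)I − 𝐉₂)`, `𝐅_m𝕍₃ = 𝕍₃(I − 𝐉₃)`, and its
spectrum is `{m} ∪ {(1+m) − λ : λ ∈ Sp(𝐉₂)} ∪ {1 − λ : λ ∈ Sp(𝐉₃)}`. -/
theorem stmt_9 {d p q : ℕ}
    (Q : Matrix (Fin d) (Fin d) ℂ)
    (V1 U1 : Matrix (Fin d) (Fin 1) ℂ)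
    (V2 U2 : Matrix (Fin d) (Fin p) ℂ) (J2 : Matrix (Fin p) (Fin p) ℂ)
    (V3 U3 : Matrix (Fin d) (Fin q) ℂ) (J3 : Matrix (Fin q) (Fin q) ℂ)
    (hdec : Q = V1 * U1ᵀ + V2 * J2 * U2ᵀ + V3 * J3 * U3ᵀ)
    (h11 : U1ᵀ * V1 = 1) (h22 : U2ᵀ * V2 = 1) (h33 : U3ᵀ * V3 = 1)
    (h12 : U1ᵀ * V2 = 0) (h13 : U1ᵀ * V3 = 0)
    (h21 : U2ᵀ * V1 = 0) (h23 : U2ᵀ * V3 = 0)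
    (h31 : U3ᵀ * V1 = 0) (h32 : U3ᵀ * V2 = 0)
    (hspan : ∀ x : Matrix (Fin d) (Fin 1) ℂ, ∃ (a : ℂ) (b : Matrix (Fin p) (Fin 1) ℂ)
      (c : Matrix (Fin q) (Fin 1) ℂ), x = a • V1 + V2 * b + V3 * c)
    (m : ℝ) (hm : 0 < m) :
    (1 - Q + (m : ℂ) • (V1 * U1ᵀ) + (m : ℂ) • (V2 * U2ᵀ)) * V1 = (m : ℂ) • V1 ∧
    (1 - Q + (m : ℂ) • (V1 * U1ᵀ) + (m : ℂ) • (V2 * U2ᵀ)) * V2 =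
      V2 * ((1 + (m : ℂ)) • 1 - J2) ∧
    (1 - Q + (m : ℂ) • (V1 * U1ᵀ) + (m : ℂ) • (V2 * U2ᵀ)) * V3 = V3 * (1 - J3) ∧
    spectrum ℂ (1 - Q + (m : ℂ) • (V1 * U1ᵀ) + (m : ℂ) • (V2 * U2ᵀ)) =
      {(m : ℂ)} ∪ (fun lam => 1 + (m : ℂ) - lam) '' spectrum ℂ J2
        ∪ (fun lam => 1 - lam) '' spectrum ℂ J3 := by
  have hQ1 : Q * V1 = V1 := by
    simp [hdec, Matrix.add_mul, Matrix.mul_assoc, h11, h21, h31]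
  have hQ2 : Q * V2 = V2 * J2 := by
    simp [hdec, Matrix.add_mul, Matrix.mul_assoc, h12, h22, h32]
  have hQ3 : Q * V3 = V3 * J3 := by
    simp [hdec, Matrix.add_mul, Matrix.mul_assoc, h13, h23, h33]
  have hF1 : (1 - Q + (m : ℂ) • (V1 * U1ᵀ) + (m : ℂ) • (V2 * U2ᵀ)) * V1 = (m : ℂ) • V1 := by
    simp only [Matrix.add_mul, Matrix.sub_mul, Matrix.one_mul, Matrix.smul_mul,
      Matrix.mul_assoc, h11, h21, hQ1, Matrix.mul_one, Matrix.mul_zero, smul_zero]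
    module
  have hF2 : (1 - Q + (m : ℂ) • (V1 * U1ᵀ) + (m : ℂ) • (V2 * U2ᵀ)) * V2 =
      V2 * ((1 + (m : ℂ)) • 1 - J2) := by
    simp only [Matrix.add_mul, Matrix.sub_mul, Matrix.one_mul, Matrix.smul_mul,
      Matrix.mul_assoc, h12, h22, hQ2, Matrix.mul_one, Matrix.mul_zero, smul_zero,
      Matrix.mul_sub, Matrix.mul_smul]
    module
  have hF3 : (1 - Q + (m : ℂ) • (V1 * U1ᵀ) + (m : ℂ) • (V2 * U2ᵀ)) * V3 = V3 * (1 - J3) := by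
    simp only [Matrix.add_mul, Matrix.sub_mul, Matrix.one_mul, Matrix.smul_mul,
      Matrix.mul_assoc, h13, h23, hQ3, Matrix.mul_one, Matrix.mul_zero, smul_zero,
      Matrix.mul_sub]
    module
  refine ⟨hF1, hF2, hF3, ?_⟩
  set F := (1 - Q + (m : ℂ) • (V1 * U1ᵀ) + (m : ℂ) • (V2 * U2ᵀ)) with hF
  set W : Matrix (Fin d) (Fin 1 ⊕ (Fin p ⊕ Fin q)) ℂ :=
    fromCols V1 (fromCols V2 V3) with hW
  set W' : Matrix (Fin 1 ⊕ (Fin p ⊕ Fin q)) (Fin d) ℂ :=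
    fromRows U1ᵀ (fromRows U2ᵀ U3ᵀ) with hW'
  have h2 : W' * W = 1 := by
    rw [hW, hW', fromRows_mul_fromCols, fromRows_mul_fromCols, mul_fromCols,
      fromRows_mul, h11, h12, h13, h21, h22, h23, h31, h32, h33, fromCols_zero,
      fromRows_zero, fromBlocks_one, fromBlocks_one]
  have h1 : W * W' = 1 := by
    apply mat_eq_one_of_forall
    intro x
    obtain ⟨a, b, c, rfl⟩ := hspan x
    have e1 : U1ᵀ * (a • V1 + V2 * b + V3 * c) = a • (1 : Matrix (Fin 1) (Fin 1) ℂ) := by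
      simp [Matrix.mul_add, Matrix.mul_smul, ← Matrix.mul_assoc, h11, h12, h13]
    have e2 : U2ᵀ * (a • V1 + V2 * b + V3 * c) = b := by
      simp [Matrix.mul_add, Matrix.mul_smul, ← Matrix.mul_assoc, h21, h22, h23]
    have e3 : U3ᵀ * (a • V1 + V2 * b + V3 * c) = c := by
      simp [Matrix.mul_add, Matrix.mul_smul, ← Matrix.mul_assoc, h31, h32, h33]
    rw [Matrix.mul_assoc, hW', fromRows_mul, fromRows_mul, e1, e2, e3, hW,
      fromCols_mul_fromRows, fromCols_mul_fromRows, Matrix.mul_smul, Matrix.mul_one,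
      add_assoc]
  set D : Matrix (Fin 1 ⊕ (Fin p ⊕ Fin q)) (Fin 1 ⊕ (Fin p ⊕ Fin q)) ℂ :=
    fromBlocks ((m : ℂ) • 1) 0 0 (fromBlocks ((1 + (m : ℂ)) • 1 - J2) 0 0 (1 - J3)) with hD
  have hFW : F * W = W * D := by
    rw [hW, mul_fromCols, mul_fromCols, hF1, hF2, hF3, hD,
      fromCols_mul_fromBlocks, fromCols_mul_fromBlocks]
    simp [Matrix.mul_smul]
  have hFeq : F = W * D * W' := by
    calc F = F * (W * W') := by rw [h1, Matrix.mul_one]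
      _ = (F * W) * W' := by rw [Matrix.mul_assoc]
      _ = W * D * W' := by rw [hFW]
  rw [hFeq, spec_conj W W' h1 h2, hD, spec_fromBlocks, spec_fromBlocks]
  have s1 : spectrum ℂ ((m : ℂ) • (1 : Matrix (Fin 1) (Fin 1) ℂ)) = {(m : ℂ)} := by
    rw [← Algebra.algebraMap_eq_smul_one]
    exact spectrum.scalar_eq _
  have s2 : spectrum ℂ ((1 + (m : ℂ)) • (1 : Matrix (Fin p) (Fin p) ℂ) - J2) =
      (fun lam => 1 + (m : ℂ) - lam) '' spectrum ℂ J2 := by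
    rw [← Algebra.algebraMap_eq_smul_one, ← spectrum.singleton_sub_eq]
    ext z
    simp only [Set.mem_sub, Set.mem_singleton_iff, Set.mem_image]
    constructor
    · rintro ⟨x, rfl, y, hy, rfl⟩; exact ⟨y, hy, rfl⟩
    · rintro ⟨y, hy, rfl⟩; exact ⟨_, rfl, y, hy, rfl⟩
  have s3 : spectrum ℂ ((1 : Matrix (Fin q) (Fin q) ℂ) - J3) =
      (fun lam => 1 - lam) '' spectrum ℂ J3 := by
    rw [show (1 : Matrix (Fin q) (Fin q) ℂ) = algebraMap ℂ _ (1 : ℂ) by simp,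
      ← spectrum.singleton_sub_eq]
    ext z
    simp only [Set.mem_sub, Set.mem_singleton_iff, Set.mem_image]
    constructor
    · rintro ⟨x, rfl, y, hy, rfl⟩; exact ⟨y, hy, rfl⟩
    · rintro ⟨y, hy, rfl⟩; exact ⟨_, rfl, y, hy, rfl⟩
  rw [s1, s2, s3, Set.union_assoc]
end

section
/- With the decomposition above, if m > 0 and every eigenvalue λ of 𝐉₃ satisfies Re(λ) < 1, then every eigenvalue of 𝐅_m = (I − 𝐐) + m𝐕₁𝐔₁' + m𝕍₂𝕌₂' has strictly positive real part (provided additionally Re(λ) < 1 + m for every eigenvalue λ of 𝐉₂). -/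
open Matrix

lemma mem_spec_iff_col {n : ℕ} (M : Matrix (Fin n) (Fin n) ℂ) (μ : ℂ) :
    μ ∈ spectrum ℂ M ↔ ∃ x : Matrix (Fin n) (Fin 1) ℂ, x ≠ 0 ∧ M * x = μ • x := by
  rw [spectrum.mem_iff, Algebra.algebraMap_eq_smul_one, Matrix.isUnit_iff_isUnit_det,
    isUnit_iff_ne_zero, not_ne_iff, ← Matrix.exists_mulVec_eq_zero_iff]
  constructor
  · rintro ⟨v, hv, hmv⟩
    refine ⟨Matrix.of (fun i _ => v i), ?_, ?_⟩
    · intro h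
      apply hv
      funext i
      exact congrFun (congrFun h i) 0
    · have : M.mulVec v = μ • v := by
        rw [Matrix.sub_mulVec, Matrix.smul_mulVec, Matrix.one_mulVec, sub_eq_zero] at hmv
        exact hmv.symm
      ext i j
      simp [Matrix.mul_apply, Matrix.mulVec, dotProduct] at this ⊢
      exact congrFun this i
  · rintro ⟨x, hx, hMx⟩
    refine ⟨fun i => x i 0, ?_, ?_⟩
    · intro h
      apply hx
      ext i j
      have := congrFun h i
      simpa [Fin.fin_one_eq_zero j] using this
    · rw [Matrix.sub_mulVec, Matrix.smul_mulVec, Matrix.one_mulVec, sub_eq_zero]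
      funext i
      have := congrFun (congrFun hMx i) 0
      simpa [Matrix.mul_apply, Matrix.mulVec, dotProduct] using this.symm

/-- if `m > 0`, every eigenvalue of `𝐉₃` has real part `< 1`, and
every eigenvalue of `𝐉₂` has real part `< 1 + m`, then every eigenvalue of
`𝐅_m = (I − 𝐐) + m𝐕₁𝐔₁' + m𝕍₂𝕌₂'` has strictly positive real part. -/
theorem stmt_10 {d p q : ℕ}
    (Q : Matrix (Fin d) (Fin d) ℂ)
    (V1 U1 : Matrix (Fin d) (Fin 1) ℂ)
    (V2 U2 : Matrix (Fin d) (Fin p) ℂ) (J2 : Matrix (Fin p) (Fin p) ℂ)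
    (V3 U3 : Matrix (Fin d) (Fin q) ℂ) (J3 : Matrix (Fin q) (Fin q) ℂ)
    (hdec : Q = V1 * U1ᵀ + V2 * J2 * U2ᵀ + V3 * J3 * U3ᵀ)
    (h11 : U1ᵀ * V1 = 1) (h22 : U2ᵀ * V2 = 1) (h33 : U3ᵀ * V3 = 1)
    (h12 : U1ᵀ * V2 = 0) (h13 : U1ᵀ * V3 = 0)
    (h21 : U2ᵀ * V1 = 0) (h23 : U2ᵀ * V3 = 0)
    (h31 : U3ᵀ * V1 = 0) (h32 : U3ᵀ * V2 = 0)
    (hspan : ∀ x : Matrix (Fin d) (Fin 1) ℂ, ∃ (a : ℂ) (b : Matrix (Fin p) (Fin 1) ℂ)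
      (c : Matrix (Fin q) (Fin 1) ℂ), x = a • V1 + V2 * b + V3 * c)
    (m : ℝ) (hm : 0 < m)
    (hJ3 : ∀ lam ∈ spectrum ℂ J3, lam.re < 1)
    (hJ2 : ∀ lam ∈ spectrum ℂ J2, lam.re < 1 + m) :
    ∀ lam ∈ spectrum ℂ (1 - Q + (m : ℂ) • (V1 * U1ᵀ) + (m : ℂ) • (V2 * U2ᵀ)),
      0 < lam.re := by
  intro lam hlam
  set F : Matrix (Fin d) (Fin d) ℂ :=
    1 - Q + (m : ℂ) • (V1 * U1ᵀ) + (m : ℂ) • (V2 * U2ᵀ) with hF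
  obtain ⟨x, hx, hFx⟩ := (mem_spec_iff_col F lam).mp hlam
  obtain ⟨a, b, c, hxdec⟩ := hspan x
  -- actions of the three dual bases on x
  have hU1x : U1ᵀ * x = a • (1 : Matrix (Fin 1) (Fin 1) ℂ) := by
    rw [hxdec]
    simp only [Matrix.mul_add, Matrix.mul_smul, ← Matrix.mul_assoc, h11, h12, h13,
      Matrix.zero_mul, add_zero]
  have hU2x : U2ᵀ * x = b := by
    rw [hxdec]
    simp only [Matrix.mul_add, Matrix.mul_smul, ← Matrix.mul_assoc, h21, h22, h23,
      Matrix.zero_mul, Matrix.one_mul, smul_zero, zero_add, add_zero]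
  have hU3x : U3ᵀ * x = c := by
    rw [hxdec]
    simp only [Matrix.mul_add, Matrix.mul_smul, ← Matrix.mul_assoc, h31, h32, h33,
      Matrix.zero_mul, Matrix.one_mul, smul_zero, zero_add, add_zero]
  -- the three rows of the eigen-equation
  have hU1F : U1ᵀ * F = (m : ℂ) • U1ᵀ := by
    rw [hF, hdec]
    simp only [Matrix.mul_add, Matrix.mul_sub, Matrix.mul_one, Matrix.mul_smul,
      ← Matrix.mul_assoc, h11, h12, h13, Matrix.zero_mul, Matrix.one_mul, add_zero,
      sub_zero]
    module
  have hU2F : U2ᵀ * F = ((1 : ℂ) + m) • U2ᵀ - J2 * U2ᵀ := by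
    rw [hF, hdec]
    simp only [Matrix.mul_add, Matrix.mul_sub, Matrix.mul_one, Matrix.mul_smul,
      ← Matrix.mul_assoc, h21, h22, h23, Matrix.zero_mul, Matrix.one_mul, add_zero,
      zero_add, sub_zero, smul_zero]
    module
  have hU3F : U3ᵀ * F = U3ᵀ - J3 * U3ᵀ := by
    rw [hF, hdec]
    simp only [Matrix.mul_add, Matrix.mul_sub, Matrix.mul_one, Matrix.mul_smul,
      ← Matrix.mul_assoc, h31, h32, h33, Matrix.zero_mul, Matrix.one_mul, add_zero,
      zero_add, sub_zero, smul_zero]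
  have e1 : (m : ℂ) • (a • (1 : Matrix (Fin 1) (Fin 1) ℂ)) = lam • (a • 1) := by
    have h : U1ᵀ * (F * x) = U1ᵀ * (lam • x) := by rw [hFx]
    rw [← Matrix.mul_assoc, hU1F, Matrix.smul_mul, Matrix.mul_smul, hU1x] at h
    exact h
  have e2 : J2 * b = ((1 : ℂ) + m - lam) • b := by
    have h : U2ᵀ * (F * x) = U2ᵀ * (lam • x) := by rw [hFx]
    rw [← Matrix.mul_assoc, hU2F, Matrix.sub_mul, Matrix.smul_mul, Matrix.mul_assoc,
      Matrix.mul_smul, hU2x] at h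
    have := sub_eq_iff_eq_add.mp h
    rw [sub_smul]
    linear_combination (norm := module) -this
  have e3 : J3 * c = ((1 : ℂ) - lam) • c := by
    have h : U3ᵀ * (F * x) = U3ᵀ * (lam • x) := by rw [hFx]
    rw [← Matrix.mul_assoc, hU3F, Matrix.sub_mul, Matrix.mul_assoc,
      Matrix.mul_smul, hU3x] at h
    have := sub_eq_iff_eq_add.mp h
    rw [sub_smul, one_smul]
    linear_combination (norm := module) -this
  by_cases ha : a = 0
  · by_cases hb : b = 0
    · by_cases hc : c = 0
      · exfalso
        apply hx
        rw [hxdec, ha, hb, hc]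
        simp
      · -- c is an eigenvector of J3 with eigenvalue 1 - lam
        have hmem : (1 : ℂ) - lam ∈ spectrum ℂ J3 :=
          (mem_spec_iff_col J3 _).mpr ⟨c, hc, e3⟩
        have := hJ3 _ hmem
        simp only [Complex.sub_re, Complex.one_re] at this
        linarith
    · have hmem : (1 : ℂ) + m - lam ∈ spectrum ℂ J2 :=
        (mem_spec_iff_col J2 _).mpr ⟨b, hb, e2⟩
      have := hJ2 _ hmem
      simp only [Complex.sub_re, Complex.add_re, Complex.one_re, Complex.ofReal_re] at this
      linarith
  · -- lam = m
    have h00 := congrFun (congrFun e1 0) 0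
    simp only [Matrix.smul_apply, Matrix.one_apply_eq, smul_eq_mul, mul_one] at h00
    have hlm : lam = m := by
      field_simp at h00
      exact h00.symm
    rw [hlm]
    simpa using hm
end
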